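/- Let f be a continuous function on an open interval I ⊆ ℝ such that for every y₀ ∈ I there exist a neighborhood U of y₀ and a convex function g : U → ℝ with g(y₀) = f(y₀) and g(y) ≤ f(y) for all y ∈ U. Then f is convex on I. -/

import Mathlib

open Set

/-- A continuous function admitting a local support line at each point of an open
interval is convex on that interval. -/
lemma convexOn_of_local_support_line (a b : ℝ) (f : ℝ → ℝ)
    (hf : ContinuousOn f (Set.Ioo a b))
    (hline : ∀ x ∈ Set.Ioo a b, ∃ c : ℝ, ∃ δ > 0,
      ∀ y ∈ Set.Ioo (x - δ) (x + δ), y ∈ Set.Ioo a b → f x + c * (y - x) ≤ f y) :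
    ConvexOn ℝ (Set.Ioo a b) f := by
  -- Key step: chord inequality for x < z.
  have key : ∀ x ∈ Set.Ioo a b, ∀ z ∈ Set.Ioo a b, x < z →
      ∀ w ∈ Set.Icc x z, f w ≤ f x + (f z - f x) / (z - x) * (w - x) := by
    intro x hx z hz hxz w hw
    set s : ℝ := (f z - f x) / (z - x) with hs
    set h : ℝ → ℝ := fun t => f t - (f x + s * (t - x)) with hh
    have hsub : Set.Icc x z ⊆ Set.Ioo a b := fun t ht =>
      ⟨lt_of_lt_of_le hx.1 ht.1, lt_of_le_of_lt ht.2 hz.2⟩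
    have hcont : ContinuousOn h (Set.Icc x z) := by
      apply ContinuousOn.sub (hf.mono hsub)
      fun_prop
    have hx0 : h x = 0 := by simp [hh]
    have hz0 : h z = 0 := by
      have h1 : s * (z - x) = f z - f x := div_mul_cancel₀ _ (by linarith : z - x ≠ 0)
      simp only [hh]
      linarith
    obtain ⟨t₁, ht₁mem, ht₁max⟩ :=
      isCompact_Icc.exists_isMaxOn (Set.nonempty_Icc.mpr hxz.le) hcont
    set M := h t₁ with hM
    -- It suffices to show M ≤ 0.
    have goal : h w ≤ 0 := by
      by_contra hwpos
      push_neg at hwpos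
      have hMpos : 0 < M := lt_of_lt_of_le hwpos (ht₁max hw)
      -- the set of maximizers
      set S : Set ℝ := Set.Icc x z ∩ h ⁻¹' {M} with hS
      have hSclosed : IsClosed S :=
        hcont.preimage_isClosed_of_isClosed isClosed_Icc isClosed_singleton
      have hSne : S.Nonempty := ⟨t₁, ht₁mem, rfl⟩
      have hSbdd : BddAbove S := ⟨z, fun t ht => ht.1.2⟩
      set t₀ := sSup S with ht₀
      have ht₀S : t₀ ∈ S := hSclosed.csSup_mem hSne hSbdd
      have ht₀Icc : t₀ ∈ Set.Icc x z := ht₀S.1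
      have ht₀M : h t₀ = M := ht₀S.2
      have ht₀x : x < t₀ := by
        rcases lt_or_eq_of_le ht₀Icc.1 with h' | h'
        · exact h'
        · exfalso; rw [← h'] at ht₀M; rw [hx0] at ht₀M; linarith
      have ht₀z : t₀ < z := by
        rcases lt_or_eq_of_le ht₀Icc.2 with h' | h'
        · exact h'
        · exfalso; rw [h'] at ht₀M; rw [hz0] at ht₀M; linarith
      have ht₀ab : t₀ ∈ Set.Ioo a b := hsub ht₀Icc
      obtain ⟨c, δ, hδ, hc⟩ := hline t₀ ht₀ab
      -- support line for h
      have hsupph : ∀ y ∈ Set.Icc x z, y ∈ Set.Ioo (t₀ - δ) (t₀ + δ) →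
          h t₀ + (c - s) * (y - t₀) ≤ h y := by
        intro y hy hyδ
        have := hc y hyδ (hsub hy)
        simp only [hh]
        nlinarith [this]
      -- pick points on either side
      set yR := min (t₀ + δ / 2) ((t₀ + z) / 2) with hyR
      set yL := max (t₀ - δ / 2) ((x + t₀) / 2) with hyL
      have hyRgt : t₀ < yR := lt_min (by linarith) (by linarith)
      have hyRlt : yR ≤ z := le_trans (min_le_right _ _) (by linarith)
      have hyRδ : yR ∈ Set.Ioo (t₀ - δ) (t₀ + δ) :=
        ⟨by linarith, lt_of_le_of_lt (min_le_left _ _) (by linarith)⟩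
      have hyRIcc : yR ∈ Set.Icc x z := ⟨le_of_lt (lt_trans ht₀x hyRgt), hyRlt⟩
      have hyLlt : yL < t₀ := max_lt (by linarith) (by linarith)
      have hyLge : x ≤ yL := le_trans (by linarith) (le_max_right _ _)
      have hyLδ : yL ∈ Set.Ioo (t₀ - δ) (t₀ + δ) :=
        ⟨lt_of_lt_of_le (by linarith) (le_max_left _ _), by linarith⟩
      have hyLIcc : yL ∈ Set.Icc x z := ⟨hyLge, le_of_lt (lt_trans hyLlt ht₀z)⟩
      have hRs := hsupph yR hyRIcc hyRδ
      have hLs := hsupph yL hyLIcc hyLδ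
      have hmaxR : h yR ≤ M := ht₁max hyRIcc
      have hmaxL : h yL ≤ M := ht₁max hyLIcc
      have hcle : c - s ≤ 0 := by nlinarith
      have hcge : 0 ≤ c - s := by nlinarith
      have hceq : c - s = 0 := le_antisymm hcle hcge
      have hyRM : h yR = M := by
        rw [hceq] at hRs; rw [ht₀M] at hRs; simp at hRs; linarith
      have : yR ≤ t₀ := le_csSup hSbdd ⟨hyRIcc, hyRM⟩
      linarith
    simp only [hh] at goal
    linarith
  constructor
  · exact convex_Ioo a b
  · intro x hx z hz p q hp hq hpq
    have hpq' : p = 1 - q := by linarith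
    subst hpq'
    simp only [smul_eq_mul]
    rcases lt_trichotomy x z with hxz | hxz | hxz
    · have h1 : (0:ℝ) ≤ q * (z - x) := mul_nonneg hq (by linarith)
      have h2 : (0:ℝ) ≤ (1 - q) * (z - x) := mul_nonneg hp (by linarith)
      have hw : (1 - q) * x + q * z ∈ Set.Icc x z := by
        constructor <;> nlinarith
      have hkey := key x hx z hz hxz _ hw
      have heq : (1 - q) * x + q * z - x = q * (z - x) := by ring
      have hzx : z - x ≠ 0 := by intro h'; linarith [sub_eq_zero.mp h']
      have hslope : (f z - f x) / (z - x) * ((1 - q) * x + q * z - x)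
          = q * (f z - f x) := by
        rw [heq, div_mul_eq_mul_div, mul_comm (f z - f x) (q * (z - x))]
        field_simp
      rw [hslope] at hkey
      nlinarith
    · subst hxz
      have : (1 - q) * x + q * x = x := by ring
      rw [this]
      nlinarith
    · have h1 : (0:ℝ) ≤ (1 - q) * (x - z) := mul_nonneg hp (by linarith)
      have h2 : (0:ℝ) ≤ q * (x - z) := mul_nonneg hq (by linarith)
      have hw : (1 - q) * x + q * z ∈ Set.Icc z x := by
        constructor <;> nlinarith
      have hkey := key z hz x hx hxz _ hw
      have heq : (1 - q) * x + q * z - z = (1 - q) * (x - z) := by ring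
      have hxz' : x - z ≠ 0 := by intro h'; linarith [sub_eq_zero.mp h']
      have hslope : (f x - f z) / (x - z) * ((1 - q) * x + q * z - z)
          = (1 - q) * (f x - f z) := by
        rw [heq, div_mul_eq_mul_div, mul_comm (f x - f z) ((1 - q) * (x - z))]
        field_simp
      rw [hslope] at hkey
      nlinarith

/-- A continuous function on an open interval that is locally supported from
below at each point by a convex function touching it there is convex. -/
theorem stmt_7 (a b : ℝ) (f : ℝ → ℝ)
    (hf : ContinuousOn f (Set.Ioo a b))
    (hsupp : ∀ y₀ ∈ Set.Ioo a b, ∃ ε > 0, Set.Ioo (y₀ - ε) (y₀ + ε) ⊆ Set.Ioo a b ∧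
      ∃ g : ℝ → ℝ, ConvexOn ℝ (Set.Ioo (y₀ - ε) (y₀ + ε)) g ∧
        g y₀ = f y₀ ∧ ∀ y ∈ Set.Ioo (y₀ - ε) (y₀ + ε), g y ≤ f y) :
    ConvexOn ℝ (Set.Ioo a b) f := by
  apply convexOn_of_local_support_line a b f hf
  intro x hx
  obtain ⟨ε, hε, hsub, g, hg, hgx, hgle⟩ := hsupp x hx
  -- subderivative of g at x
  set T : Set ℝ := (fun v => (g v - g x) / (v - x)) '' Set.Ioo x (x + ε) with hT
  have hxI : x ∈ Set.Ioo (x - ε) (x + ε) := ⟨by linarith, by linarith⟩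
  have hTne : T.Nonempty := ⟨_, ⟨x + ε / 2, ⟨by linarith, by linarith⟩, rfl⟩⟩
  have hleft : ∀ u ∈ Set.Ioo (x - ε) x, ∀ v ∈ Set.Ioo x (x + ε),
      (g x - g u) / (x - u) ≤ (g v - g x) / (v - x) := by
    intro u hu v hv
    exact hg.slope_mono_adjacent (x := u) (y := x) (z := v)
      ⟨hu.1, lt_of_lt_of_le hu.2 (by linarith)⟩ ⟨lt_of_le_of_lt (by linarith) hv.1, hv.2⟩
      hu.2 hv.1
  have hTbdd : BddBelow T := by
    refine ⟨(g x - g (x - ε / 2)) / (x - (x - ε / 2)), ?_⟩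
    rintro _ ⟨v, hv, rfl⟩
    exact hleft (x - ε / 2) ⟨by linarith, by linarith⟩ v hv
  set c := sInf T with hc
  refine ⟨c, ε, hε, ?_⟩
  intro y hy _
  rcases lt_trichotomy y x with hyx | hyx | hyx
  · -- y < x : slope g y x ≤ c
    have hlb : (g x - g y) / (x - y) ≤ c := by
      apply le_csInf hTne
      rintro _ ⟨v, hv, rfl⟩
      exact hleft y ⟨hy.1, hyx⟩ v hv
    have hxy : 0 < x - y := by linarith
    have : g x - g y ≤ c * (x - y) := by
      have := (div_le_iff₀ hxy).mp hlb
      linarith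
    have hgyf : g y ≤ f y := hgle y hy
    have : f x + c * (y - x) ≤ g y := by rw [← hgx]; nlinarith
    linarith
  · subst hyx; simp
  · -- x < y : c ≤ slope g x y
    have hub : c ≤ (g y - g x) / (y - x) := csInf_le hTbdd ⟨y, ⟨hyx, hy.2⟩, rfl⟩
    have hxy : 0 < y - x := by linarith
    have : c * (y - x) ≤ g y - g x := by
      have := (le_div_iff₀ hxy).mp hub
      linarith
    have hgyf : g y ≤ f y := hgle y hy
    have : f x + c * (y - x) ≤ g y := by rw [← hgx]; linarith
    linarith
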